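/- Let G₁ and G₂ be topological groups, let X₁ and X₂ be unbounded CAT(0) spaces, each Xᵢ equipped with a continuous action of Gᵢ by isometries, and let X = X₁ ×₂ X₂ be the ℓ²-product equipped with the product action of G = G₁ × G₂. Then: (i) for each i, the action of Gᵢ on X (acting on the factor Xᵢ and trivially on the other factor) is evanescent; (ii) the G-action on X is evanescent (respectively weakly evanescent) if and only if at least one of the Gᵢ-actions on Xᵢ is evanescent (respectively weakly evanescent). -/

import Mathlib

/-- A map `σ : ℝ → X` is a geodesic (isometric) on the interval `[a, b]`. -/
def IsGeodesicOn {X : Type*} [MetricSpace X] (σ : ℝ → X) (a b : ℝ) : Prop :=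
  ∀ s ∈ Set.Icc a b, ∀ t ∈ Set.Icc a b, dist (σ s) (σ t) = |s - t|

/-- A geodesic metric space: any two points are joined by a geodesic segment. -/
def IsGeodesicSpace (X : Type*) [MetricSpace X] : Prop :=
  ∀ x y : X, ∃ σ : ℝ → X, IsGeodesicOn σ 0 (dist x y) ∧ σ 0 = x ∧ σ (dist x y) = y

/-- A CAT(0) space: a geodesic space satisfying the CN inequality of Bruhat–Tits
for all (metric) midpoints. -/
def IsCAT0 (X : Type*) [MetricSpace X] : Prop :=
  IsGeodesicSpace X ∧
    ∀ x c c' m : X, dist m c = dist c c' / 2 → dist m c' = dist c c' / 2 →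
      2 * dist m x ^ 2 ≤ dist c' x ^ 2 + dist c x ^ 2 - dist c' c ^ 2 / 2

/-- A subset of a metric space is (geodesically) convex if it contains every geodesic
segment joining any two of its points. -/
def GConvex {X : Type*} [MetricSpace X] (A : Set X) : Prop :=
  ∀ (σ : ℝ → X) (a b : ℝ), a ≤ b → IsGeodesicOn σ a b → σ a ∈ A → σ b ∈ A →
    ∀ t ∈ Set.Icc a b, σ t ∈ A

/-- `ρ` is an action of the group `G` on `X` by isometries. -/
def IsIsometricAction {G X : Type*} [Group G] [MetricSpace X] (ρ : G → X → X) : Prop :=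
  (∀ x, ρ 1 x = x) ∧ (∀ g h x, ρ (g * h) x = ρ g (ρ h x)) ∧ ∀ g : G, Isometry (ρ g)

/-- A subset `T ⊆ X` is `Q`-evanescent: the set of displacements `d(g x, x)`,
`g ∈ Q`, `x ∈ T`, is bounded. -/
def QEvanescent {G X : Type*} [MetricSpace X] (ρ : G → X → X) (Q : Set G) (T : Set X) : Prop :=
  ∃ C : ℝ, ∀ g ∈ Q, ∀ x ∈ T, dist (ρ g x) x ≤ C

/-- The action is evanescent: there is an unbounded set which is `Q`-evanescent
for every compact `Q ⊆ G`. -/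
def Evanescent {G X : Type*} [TopologicalSpace G] [MetricSpace X] (ρ : G → X → X) : Prop :=
  ∃ T : Set X, ¬ Bornology.IsBounded T ∧ ∀ Q : Set G, IsCompact Q → QEvanescent ρ Q T

/-- The action is weakly evanescent: for every compact `Q ⊆ G` there is an unbounded
`Q`-evanescent set. -/
def WeaklyEvanescent {G X : Type*} [TopologicalSpace G] [MetricSpace X] (ρ : G → X → X) : Prop :=
  ∀ Q : Set G, IsCompact Q → ∃ T : Set X, ¬ Bornology.IsBounded T ∧ QEvanescent ρ Q T

open scoped ENNReal

/-- The product action of `G₁ × G₂` on the `ℓ²`-product `X₁ ×₂ X₂`. -/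
noncomputable def prodAction {G₁ G₂ X₁ X₂ : Type*} (ρ₁ : G₁ → X₁ → X₁) (ρ₂ : G₂ → X₂ → X₂) :
    (G₁ × G₂) → WithLp 2 (X₁ × X₂) → WithLp 2 (X₁ × X₂) := fun g x =>
  (WithLp.equiv 2 (X₁ × X₂)).symm
    (ρ₁ g.1 ((WithLp.equiv 2 (X₁ × X₂)) x).1, ρ₂ g.2 ((WithLp.equiv 2 (X₁ × X₂)) x).2)


section Helpers
variable {X₁ X₂ : Type*} [MetricSpace X₁] [MetricSpace X₂]

lemma distL2 (x y : WithLp 2 (X₁ × X₂)) :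
    dist x y = Real.sqrt (dist x.fst y.fst ^ 2 + dist x.snd y.snd ^ 2) := by
  rw [WithLp.prod_dist_eq_add (by norm_num : 0 < (2 : ℝ≥0∞).toReal)]
  have h2 : ((2 : ℝ≥0∞).toReal) = (2 : ℝ) := by norm_num
  rw [h2, Real.sqrt_eq_rpow, ← Real.rpow_natCast (dist x.fst y.fst) 2,
    ← Real.rpow_natCast (dist x.snd y.snd) 2]
  norm_num

lemma distL2_fst_le (x y : WithLp 2 (X₁ × X₂)) : dist x.fst y.fst ≤ dist x y := by
  rw [distL2]
  have h1 : dist x.fst y.fst ^ 2 ≤ dist x.fst y.fst ^ 2 + dist x.snd y.snd ^ 2 :=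
    le_add_of_nonneg_right (sq_nonneg _)
  have h := Real.sqrt_le_sqrt h1
  rwa [Real.sqrt_sq dist_nonneg] at h

lemma distL2_snd_le (x y : WithLp 2 (X₁ × X₂)) : dist x.snd y.snd ≤ dist x y := by
  rw [distL2]
  have h1 : dist x.snd y.snd ^ 2 ≤ dist x.fst y.fst ^ 2 + dist x.snd y.snd ^ 2 :=
    le_add_of_nonneg_left (sq_nonneg _)
  have h := Real.sqrt_le_sqrt h1
  rwa [Real.sqrt_sq dist_nonneg] at h

lemma distL2_le_add (x y : WithLp 2 (X₁ × X₂)) :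
    dist x y ≤ dist x.fst y.fst + dist x.snd y.snd := by
  rw [distL2]
  have h : dist x.fst y.fst ^ 2 + dist x.snd y.snd ^ 2 ≤ (dist x.fst y.fst + dist x.snd y.snd) ^ 2 := by
    nlinarith [dist_nonneg (x := x.fst) (y := y.fst), dist_nonneg (x := x.snd) (y := y.snd)]
  calc Real.sqrt (dist x.fst y.fst ^ 2 + dist x.snd y.snd ^ 2)
      ≤ Real.sqrt ((dist x.fst y.fst + dist x.snd y.snd) ^ 2) := Real.sqrt_le_sqrt h
    _ = dist x.fst y.fst + dist x.snd y.snd := Real.sqrt_sq (by positivity)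

/-- A compact set of group elements has bounded displacement at a fixed point. -/
lemma compact_disp_bound {G X : Type*} [TopologicalSpace G] [MetricSpace X]
    (ρ : G → X → X) (hcont : Continuous fun p : G × X => ρ p.1 p.2)
    {Q : Set G} (hQ : IsCompact Q) (x₀ : X) :
    ∃ C : ℝ, 0 ≤ C ∧ ∀ g ∈ Q, dist (ρ g x₀) x₀ ≤ C := by
  have hf : Continuous fun g : G => dist (ρ g x₀) x₀ := by
    exact (hcont.comp (continuous_id.prodMk continuous_const)).dist continuous_const
  have himg : IsCompact ((fun g : G => dist (ρ g x₀) x₀) '' Q) := hQ.image hf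
  obtain ⟨C, hC⟩ := himg.bddAbove
  exact ⟨max C 0, le_max_right _ _, fun g hg =>
    le_trans (hC ⟨g, hg, rfl⟩) (le_max_left _ _)⟩

end Helpers

set_option linter.unusedSectionVars false

section Helpers2
variable {X₁ X₂ : Type*} [MetricSpace X₁] [MetricSpace X₂]

lemma unbounded_emb_left {T₁ : Set X₁} (h : ¬ Bornology.IsBounded T₁) (x₂ : X₂) :
    ¬ Bornology.IsBounded {x : WithLp 2 (X₁ × X₂) | x.fst ∈ T₁ ∧ x.snd = x₂} := by
  intro hb
  apply h
  rw [Metric.isBounded_iff] at hb ⊢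
  obtain ⟨C, hC⟩ := hb
  refine ⟨C, fun a ha b hb' => ?_⟩
  have h1 := hC (x := (WithLp.equiv 2 (X₁ × X₂)).symm (a, x₂)) ⟨ha, rfl⟩
    (y := (WithLp.equiv 2 (X₁ × X₂)).symm (b, x₂)) ⟨hb', rfl⟩
  rw [distL2] at h1
  simpa [Real.sqrt_sq dist_nonneg] using h1

lemma unbounded_emb_right {T₂ : Set X₂} (h : ¬ Bornology.IsBounded T₂) (x₁ : X₁) :
    ¬ Bornology.IsBounded {x : WithLp 2 (X₁ × X₂) | x.fst = x₁ ∧ x.snd ∈ T₂} := by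
  intro hb
  apply h
  rw [Metric.isBounded_iff] at hb ⊢
  obtain ⟨C, hC⟩ := hb
  refine ⟨C, fun a ha b hb' => ?_⟩
  have h1 := hC (x := (WithLp.equiv 2 (X₁ × X₂)).symm (x₁, a)) ⟨rfl, ha⟩
    (y := (WithLp.equiv 2 (X₁ × X₂)).symm (x₁, b)) ⟨rfl, hb'⟩
  rw [distL2] at h1
  simpa [Real.sqrt_sq dist_nonneg] using h1

lemma bounded_of_proj {T : Set (WithLp 2 (X₁ × X₂))}
    (h1 : Bornology.IsBounded ((fun x : WithLp 2 (X₁ × X₂) => x.fst) '' T))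
    (h2 : Bornology.IsBounded ((fun x : WithLp 2 (X₁ × X₂) => x.snd) '' T)) :
    Bornology.IsBounded T := by
  rw [Metric.isBounded_iff] at h1 h2 ⊢
  obtain ⟨C₁, hC₁⟩ := h1
  obtain ⟨C₂, hC₂⟩ := h2
  exact ⟨C₁ + C₂, fun x hx y hy => le_trans (distL2_le_add x y)
    (add_le_add (hC₁ ⟨x, hx, rfl⟩ ⟨y, hy, rfl⟩) (hC₂ ⟨x, hx, rfl⟩ ⟨y, hy, rfl⟩))⟩

end Helpers2

section Main
variable {G₁ G₂ : Type*} [Group G₁] [Group G₂]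
  [TopologicalSpace G₁] [TopologicalSpace G₂]
  {X₁ X₂ : Type*} [MetricSpace X₁] [MetricSpace X₂]
  (ρ₁ : G₁ → X₁ → X₁) (ρ₂ : G₂ → X₂ → X₂)

lemma disp_eq (g : G₁ × G₂) (x : WithLp 2 (X₁ × X₂)) :
    dist (prodAction ρ₁ ρ₂ g x) x
      = Real.sqrt (dist (ρ₁ g.1 x.fst) x.fst ^ 2 + dist (ρ₂ g.2 x.snd) x.snd ^ 2) :=
  distL2 (prodAction ρ₁ ρ₂ g x) x

lemma disp_fst_le (g : G₁ × G₂) (x : WithLp 2 (X₁ × X₂)) :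
    dist (ρ₁ g.1 x.fst) x.fst ≤ dist (prodAction ρ₁ ρ₂ g x) x :=
  distL2_fst_le (prodAction ρ₁ ρ₂ g x) x

lemma disp_snd_le (g : G₁ × G₂) (x : WithLp 2 (X₁ × X₂)) :
    dist (ρ₂ g.2 x.snd) x.snd ≤ dist (prodAction ρ₁ ρ₂ g x) x :=
  distL2_snd_le (prodAction ρ₁ ρ₂ g x) x

lemma disp_le_add (g : G₁ × G₂) (x : WithLp 2 (X₁ × X₂)) :
    dist (prodAction ρ₁ ρ₂ g x) x
      ≤ dist (ρ₁ g.1 x.fst) x.fst + dist (ρ₂ g.2 x.snd) x.snd :=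
  distL2_le_add (prodAction ρ₁ ρ₂ g x) x

/-- If `ρ₁` is evanescent then so is the product action. -/
lemma evan_prod_left
    (hcont₂ : Continuous fun p : G₂ × X₂ => ρ₂ p.1 p.2) (o₂ : X₂)
    (h : Evanescent ρ₁) : Evanescent (prodAction ρ₁ ρ₂) := by
  obtain ⟨T₁, hT₁, hQE⟩ := h
  refine ⟨{x : WithLp 2 (X₁ × X₂) | x.fst ∈ T₁ ∧ x.snd = o₂}, unbounded_emb_left hT₁ o₂, ?_⟩
  intro Q hQ
  obtain ⟨C₁, hC₁⟩ := hQE (Prod.fst '' Q) (hQ.image continuous_fst)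
  obtain ⟨C₂, -, hC₂⟩ := compact_disp_bound ρ₂ hcont₂ (hQ.image continuous_snd) o₂
  refine ⟨C₁ + C₂, fun g hg x hx => ?_⟩
  calc dist (prodAction ρ₁ ρ₂ g x) x
      ≤ dist (ρ₁ g.1 x.fst) x.fst + dist (ρ₂ g.2 x.snd) x.snd := disp_le_add ρ₁ ρ₂ g x
    _ ≤ C₁ + C₂ := by
        refine add_le_add (hC₁ g.1 ⟨g, hg, rfl⟩ x.fst hx.1) ?_
        rw [hx.2]
        exact hC₂ g.2 ⟨g, hg, rfl⟩

/-- If `ρ₂` is evanescent then so is the product action. -/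
lemma evan_prod_right
    (hcont₁ : Continuous fun p : G₁ × X₁ => ρ₁ p.1 p.2) (o₁ : X₁)
    (h : Evanescent ρ₂) : Evanescent (prodAction ρ₁ ρ₂) := by
  obtain ⟨T₂, hT₂, hQE⟩ := h
  refine ⟨{x : WithLp 2 (X₁ × X₂) | x.fst = o₁ ∧ x.snd ∈ T₂}, unbounded_emb_right hT₂ o₁, ?_⟩
  intro Q hQ
  obtain ⟨C₂, hC₂⟩ := hQE (Prod.snd '' Q) (hQ.image continuous_snd)
  obtain ⟨C₁, -, hC₁⟩ := compact_disp_bound ρ₁ hcont₁ (hQ.image continuous_fst) o₁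
  refine ⟨C₁ + C₂, fun g hg x hx => ?_⟩
  calc dist (prodAction ρ₁ ρ₂ g x) x
      ≤ dist (ρ₁ g.1 x.fst) x.fst + dist (ρ₂ g.2 x.snd) x.snd := disp_le_add ρ₁ ρ₂ g x
    _ ≤ C₁ + C₂ := by
        refine add_le_add ?_ (hC₂ g.2 ⟨g, hg, rfl⟩ x.snd hx.2)
        rw [hx.1]
        exact hC₁ g.1 ⟨g, hg, rfl⟩

lemma wevan_prod_left
    (hcont₂ : Continuous fun p : G₂ × X₂ => ρ₂ p.1 p.2) (o₂ : X₂)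
    (h : WeaklyEvanescent ρ₁) : WeaklyEvanescent (prodAction ρ₁ ρ₂) := by
  intro Q hQ
  obtain ⟨T₁, hT₁, C₁, hC₁⟩ := h (Prod.fst '' Q) (hQ.image continuous_fst)
  obtain ⟨C₂, -, hC₂⟩ := compact_disp_bound ρ₂ hcont₂ (hQ.image continuous_snd) o₂
  refine ⟨{x : WithLp 2 (X₁ × X₂) | x.fst ∈ T₁ ∧ x.snd = o₂}, unbounded_emb_left hT₁ o₂,
    C₁ + C₂, fun g hg x hx => ?_⟩
  calc dist (prodAction ρ₁ ρ₂ g x) x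
      ≤ dist (ρ₁ g.1 x.fst) x.fst + dist (ρ₂ g.2 x.snd) x.snd := disp_le_add ρ₁ ρ₂ g x
    _ ≤ C₁ + C₂ := by
        refine add_le_add (hC₁ g.1 ⟨g, hg, rfl⟩ x.fst hx.1) ?_
        rw [hx.2]
        exact hC₂ g.2 ⟨g, hg, rfl⟩

lemma wevan_prod_right
    (hcont₁ : Continuous fun p : G₁ × X₁ => ρ₁ p.1 p.2) (o₁ : X₁)
    (h : WeaklyEvanescent ρ₂) : WeaklyEvanescent (prodAction ρ₁ ρ₂) := by
  intro Q hQ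
  obtain ⟨T₂, hT₂, C₂, hC₂⟩ := h (Prod.snd '' Q) (hQ.image continuous_snd)
  obtain ⟨C₁, -, hC₁⟩ := compact_disp_bound ρ₁ hcont₁ (hQ.image continuous_fst) o₁
  refine ⟨{x : WithLp 2 (X₁ × X₂) | x.fst = o₁ ∧ x.snd ∈ T₂}, unbounded_emb_right hT₂ o₁,
    C₁ + C₂, fun g hg x hx => ?_⟩
  calc dist (prodAction ρ₁ ρ₂ g x) x
      ≤ dist (ρ₁ g.1 x.fst) x.fst + dist (ρ₂ g.2 x.snd) x.snd := disp_le_add ρ₁ ρ₂ g x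
    _ ≤ C₁ + C₂ := by
        refine add_le_add ?_ (hC₂ g.2 ⟨g, hg, rfl⟩ x.snd hx.2)
        rw [hx.1]
        exact hC₁ g.1 ⟨g, hg, rfl⟩

end Main

section Main2
variable {G₁ G₂ : Type*} [Group G₁] [Group G₂]
  [TopologicalSpace G₁] [TopologicalSpace G₂]
  {X₁ X₂ : Type*} [MetricSpace X₁] [MetricSpace X₂]
  (ρ₁ : G₁ → X₁ → X₁) (ρ₂ : G₂ → X₂ → X₂)

/-- Part (i), first factor. -/
lemma part_i_left
    (hcont₁ : Continuous fun p : G₁ × X₁ => ρ₁ p.1 p.2)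
    (h₂one : ∀ x, ρ₂ 1 x = x) (o₁ : X₁)
    (hub₂ : ¬ Bornology.IsBounded (Set.univ : Set X₂)) :
    Evanescent (fun (g : G₁) (x : WithLp 2 (X₁ × X₂)) => prodAction ρ₁ ρ₂ (g, 1) x) := by
  refine ⟨{x : WithLp 2 (X₁ × X₂) | x.fst = o₁ ∧ x.snd ∈ (Set.univ : Set X₂)},
    unbounded_emb_right hub₂ o₁, ?_⟩
  intro Q hQ
  obtain ⟨C, -, hC⟩ := compact_disp_bound ρ₁ hcont₁ hQ o₁
  refine ⟨C, fun g hg x hx => ?_⟩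
  have he : dist (prodAction ρ₁ ρ₂ (g, 1) x) x
      = Real.sqrt (dist (ρ₁ g x.fst) x.fst ^ 2 + dist (ρ₂ 1 x.snd) x.snd ^ 2) :=
    disp_eq ρ₁ ρ₂ (g, 1) x
  rw [he, h₂one, dist_self]
  have : Real.sqrt (dist (ρ₁ g x.fst) x.fst ^ 2 + 0 ^ 2)
      = dist (ρ₁ g x.fst) x.fst := by
    simp [Real.sqrt_sq dist_nonneg]
  rw [this, hx.1]
  exact hC g hg

/-- Part (i), second factor. -/
lemma part_i_right
    (hcont₂ : Continuous fun p : G₂ × X₂ => ρ₂ p.1 p.2)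
    (h₁one : ∀ x, ρ₁ 1 x = x) (o₂ : X₂)
    (hub₁ : ¬ Bornology.IsBounded (Set.univ : Set X₁)) :
    Evanescent (fun (g : G₂) (x : WithLp 2 (X₁ × X₂)) => prodAction ρ₁ ρ₂ (1, g) x) := by
  refine ⟨{x : WithLp 2 (X₁ × X₂) | x.fst ∈ (Set.univ : Set X₁) ∧ x.snd = o₂},
    unbounded_emb_left hub₁ o₂, ?_⟩
  intro Q hQ
  obtain ⟨C, -, hC⟩ := compact_disp_bound ρ₂ hcont₂ hQ o₂
  refine ⟨C, fun g hg x hx => ?_⟩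
  have he : dist (prodAction ρ₁ ρ₂ (1, g) x) x
      = Real.sqrt (dist (ρ₁ 1 x.fst) x.fst ^ 2 + dist (ρ₂ g x.snd) x.snd ^ 2) :=
    disp_eq ρ₁ ρ₂ (1, g) x
  rw [he, h₁one, dist_self]
  have : Real.sqrt (0 ^ 2 + dist (ρ₂ g x.snd) x.snd ^ 2)
      = dist (ρ₂ g x.snd) x.snd := by
    simp [Real.sqrt_sq dist_nonneg]
  rw [this, hx.2]
  exact hC g hg

/-- If the product action is evanescent, one of the factors is. -/
lemma evan_prod_to (h : Evanescent (prodAction ρ₁ ρ₂)) :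
    Evanescent ρ₁ ∨ Evanescent ρ₂ := by
  obtain ⟨T, hT, hQE⟩ := h
  have hdisj : ¬ Bornology.IsBounded ((fun x : WithLp 2 (X₁ × X₂) => x.fst) '' T)
      ∨ ¬ Bornology.IsBounded ((fun x : WithLp 2 (X₁ × X₂) => x.snd) '' T) := by
    by_contra hcon
    push_neg at hcon
    exact hT (bounded_of_proj hcon.1 hcon.2)
  rcases hdisj with h1 | h2
  · refine Or.inl ⟨_, h1, fun Q hQ => ?_⟩
    obtain ⟨C, hC⟩ := hQE (Q ×ˢ ({1} : Set G₂)) (hQ.prod isCompact_singleton)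
    refine ⟨C, fun g hg y hy => ?_⟩
    obtain ⟨x, hx, rfl⟩ := hy
    exact le_trans (disp_fst_le ρ₁ ρ₂ (g, 1) x) (hC (g, 1) ⟨hg, rfl⟩ x hx)
  · refine Or.inr ⟨_, h2, fun Q hQ => ?_⟩
    obtain ⟨C, hC⟩ := hQE (({1} : Set G₁) ×ˢ Q) (isCompact_singleton.prod hQ)
    refine ⟨C, fun g hg y hy => ?_⟩
    obtain ⟨x, hx, rfl⟩ := hy
    exact le_trans (disp_snd_le ρ₁ ρ₂ (1, g) x) (hC (1, g) ⟨rfl, hg⟩ x hx)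

/-- If the product action is weakly evanescent, one of the factors is. -/
lemma wevan_prod_to (h : WeaklyEvanescent (prodAction ρ₁ ρ₂)) :
    WeaklyEvanescent ρ₁ ∨ WeaklyEvanescent ρ₂ := by
  by_contra hcon
  push_neg at hcon
  obtain ⟨h1, h2⟩ := hcon
  rw [WeaklyEvanescent] at h1 h2
  push_neg at h1 h2
  obtain ⟨Q₁, hQ₁, hq₁⟩ := h1
  obtain ⟨Q₂, hQ₂, hq₂⟩ := h2
  obtain ⟨T, hT, C, hC⟩ :=
    h ((insert 1 Q₁) ×ˢ (insert 1 Q₂)) ((hQ₁.insert 1).prod (hQ₂.insert 1))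
  have hb1 : Bornology.IsBounded ((fun x : WithLp 2 (X₁ × X₂) => x.fst) '' T) := by
    by_contra hbf
    refine hq₁ _ hbf ⟨C, fun g hg y hy => ?_⟩
    obtain ⟨x, hx, rfl⟩ := hy
    exact le_trans (disp_fst_le ρ₁ ρ₂ (g, 1) x)
      (hC (g, 1) ⟨Set.mem_insert_of_mem _ hg, Set.mem_insert _ _⟩ x hx)
  have hb2 : Bornology.IsBounded ((fun x : WithLp 2 (X₁ × X₂) => x.snd) '' T) := by
    by_contra hbf
    refine hq₂ _ hbf ⟨C, fun g hg y hy => ?_⟩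
    obtain ⟨x, hx, rfl⟩ := hy
    exact le_trans (disp_snd_le ρ₁ ρ₂ (1, g) x)
      (hC (1, g) ⟨Set.mem_insert _ _, Set.mem_insert_of_mem _ hg⟩ x hx)
  exact hT (bounded_of_proj hb1 hb2)

end Main2

/-- Monod, Proposition: for continuous isometric actions of `Gᵢ` on unbounded CAT(0) spaces
`Xᵢ` and the product action of `G = G₁ × G₂` on the `ℓ²`-product `X = X₁ ×₂ X₂`:
(i) each `Gᵢ`-action on `X` (acting on the `i`-th factor and trivially on the other)
is evanescent; (ii) the `G`-action on `X` is evanescent (resp. weakly evanescent) iff at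
least one of the `Gᵢ`-actions on `Xᵢ` is so. -/
theorem prod_evanescence
    {G₁ G₂ : Type*} [Group G₁] [Group G₂]
    [TopologicalSpace G₁] [TopologicalSpace G₂]
    [IsTopologicalGroup G₁] [IsTopologicalGroup G₂]
    {X₁ X₂ : Type*} [MetricSpace X₁] [MetricSpace X₂]
    (hX₁ : IsCAT0 X₁) (hX₂ : IsCAT0 X₂)
    (hub₁ : ¬ Bornology.IsBounded (Set.univ : Set X₁))
    (hub₂ : ¬ Bornology.IsBounded (Set.univ : Set X₂))
    (ρ₁ : G₁ → X₁ → X₁) (ρ₂ : G₂ → X₂ → X₂)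
    (hact₁ : IsIsometricAction ρ₁) (hact₂ : IsIsometricAction ρ₂)
    (hcont₁ : Continuous fun p : G₁ × X₁ => ρ₁ p.1 p.2)
    (hcont₂ : Continuous fun p : G₂ × X₂ => ρ₂ p.1 p.2) :
    (Evanescent (fun (g : G₁) (x : WithLp 2 (X₁ × X₂)) => prodAction ρ₁ ρ₂ (g, 1) x) ∧
      Evanescent (fun (g : G₂) (x : WithLp 2 (X₁ × X₂)) => prodAction ρ₁ ρ₂ (1, g) x)) ∧
    (Evanescent (prodAction ρ₁ ρ₂) ↔ (Evanescent ρ₁ ∨ Evanescent ρ₂)) ∧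
    (WeaklyEvanescent (prodAction ρ₁ ρ₂) ↔ (WeaklyEvanescent ρ₁ ∨ WeaklyEvanescent ρ₂)) := by
  have hne₁ : Nonempty X₁ := by
    by_contra h
    rw [not_nonempty_iff] at h
    rw [Set.univ_eq_empty_iff.mpr h] at hub₁
    exact hub₁ Bornology.isBounded_empty
  have hne₂ : Nonempty X₂ := by
    by_contra h
    rw [not_nonempty_iff] at h
    rw [Set.univ_eq_empty_iff.mpr h] at hub₂
    exact hub₂ Bornology.isBounded_empty
  obtain ⟨o₁⟩ := hne₁
  obtain ⟨o₂⟩ := hne₂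
  refine ⟨⟨part_i_left ρ₁ ρ₂ hcont₁ hact₂.1 o₁ hub₂,
      part_i_right ρ₁ ρ₂ hcont₂ hact₁.1 o₂ hub₁⟩,
    ⟨evan_prod_to ρ₁ ρ₂, fun h => ?_⟩,
    ⟨wevan_prod_to ρ₁ ρ₂, fun h => ?_⟩⟩
  · exact h.elim (evan_prod_left ρ₁ ρ₂ hcont₂ o₂) (evan_prod_right ρ₁ ρ₂ hcont₁ o₁)
  · exact h.elim (wevan_prod_left ρ₁ ρ₂ hcont₂ o₂) (wevan_prod_right ρ₁ ρ₂ hcont₁ o₁)
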